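/- Let $(X_t)$ be an absorbed Markov process with QSD $\pi$, and suppose: (i) for some time $t_2 > 0$ there is a submarkovian kernel $R$ with $\pi(dx)P_{t_2}(x,dy) = \pi(dy)R(y,dx)$; (ii) there is $C_2' < \infty$ with $\frac{R(y,\cdot)}{R1(y)} \le C_2'\pi(\cdot)$ for $\pi$-a.e. $y$; (iii) $\pi$ has full support; and (iv) $P_{t_2}$ is lower semicontinuous (maps bounded non-negative continuous functions to lower semicontinuous functions). Then $P_{t_2}(x,\cdot) \le \lambda^{t_2}C_2' \pi(\cdot)$ for every $x \in \chi$ (not merely $\pi$-a.e.). -/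

import Mathlib

open MeasureTheory ProbabilityTheory
open scoped ENNReal NNReal

/-- if the time-reversal kernel `R` of `P_{t₂}` at quasi-stationarity
satisfies `R(y,·)/R1(y) ≤ C₂' π` for π-a.e. `y`, `π` has full support, and `P_{t₂}` is
lower semicontinuous, then `P_{t₂}(x,·) ≤ λ^{t₂} C₂' π` for *every* `x ∈ χ`. -/
theorem stmt_10 {χ : Type*} [MetricSpace χ] [MeasurableSpace χ] [BorelSpace χ]
    (P R : Kernel χ χ)
    (hPsub : ∀ x, P x Set.univ ≤ 1) (hRsub : ∀ y, R y Set.univ ≤ 1)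
    (π : Measure χ) [IsProbabilityMeasure π]
    (l : ℝ≥0∞) (hl0 : 0 < l) (hl1 : l ≤ 1)
    (t2 : ℝ) (ht2 : 0 < t2)
    (hQSD : π.bind (fun x => P x) = (l ^ t2) • π)
    (hrev : ∀ s t : Set χ, MeasurableSet s → MeasurableSet t →
      ∫⁻ x in s, P x t ∂π = ∫⁻ y in t, R y s ∂π)
    (C2' : ℝ) (hC2'pos : 0 < C2')
    (hC2' : ∀ᵐ y ∂π, ∀ s : Set χ, MeasurableSet s →
      R y s ≤ ENNReal.ofReal C2' * R y Set.univ * π s)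
    (hsupp : ∀ U : Set χ, IsOpen U → U.Nonempty → 0 < π U)
    (hlsc : ∀ f : χ → ℝ, Continuous f → (∀ x, 0 ≤ f x) → (∃ C, ∀ x, f x ≤ C) →
      LowerSemicontinuous fun x => ∫ y, f y ∂(P x)) :
    ∀ x : χ, ∀ s : Set χ, MeasurableSet s →
      P x s ≤ l ^ t2 * ENNReal.ofReal C2' * π s := by
  set L : ℝ≥0∞ := l ^ t2 with hL
  set c2 : ℝ≥0∞ := ENNReal.ofReal C2' with hc2
  have hLle1 : L ≤ 1 := ENNReal.rpow_le_one hl1 ht2.le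
  have hLlt : L < ∞ := lt_of_le_of_lt hLle1 ENNReal.one_lt_top
  have hc2lt : c2 < ∞ := ENNReal.ofReal_lt_top
  have hFin : ∀ z : χ, IsFiniteMeasure (P z) :=
    fun z => ⟨lt_of_le_of_lt (hPsub z) ENNReal.one_lt_top⟩
  -- Step 1: R 1 ≤ L a.e.
  have hR1 : ∀ᵐ y ∂π, R y Set.univ ≤ L := by
    refine ae_le_of_forall_setLIntegral_le_of_sigmaFinite
      (R.measurable_coe MeasurableSet.univ) (fun t ht _ => ?_)
    have h1 : ∫⁻ y in t, R y Set.univ ∂π = ∫⁻ x in Set.univ, P x t ∂π :=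
      (hrev Set.univ t MeasurableSet.univ ht).symm
    have h2 : ∫⁻ x, P x t ∂π = L * π t := by
      have := congrArg (fun μ : Measure χ => μ t) hQSD
      simpa [Measure.bind_apply ht P.measurable.aemeasurable] using this
    rw [h1, Measure.restrict_univ, h2, setLIntegral_const]
  -- Step 2: a.e. bound for R
  have hRbound : ∀ᵐ y ∂π, ∀ s : Set χ, MeasurableSet s → R y s ≤ c2 * L * π s := by
    filter_upwards [hC2', hR1] with y h1 h2 s hs
    calc R y s ≤ c2 * R y Set.univ * π s := h1 s hs
    _ ≤ c2 * L * π s := by gcongr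
  -- Step 3: for each measurable t, a.e. bound for P
  have hPae : ∀ t : Set χ, MeasurableSet t → ∀ᵐ x ∂π, P x t ≤ L * c2 * π t := by
    intro t ht
    refine ae_le_of_forall_setLIntegral_le_of_sigmaFinite
      (P.measurable_coe ht) (fun s hs _ => ?_)
    have h2 : ∫⁻ y in t, R y s ∂π ≤ c2 * L * π s * π t := by
      calc ∫⁻ y in t, R y s ∂π ≤ ∫⁻ _ in t, c2 * L * π s ∂π := by
            refine setLIntegral_mono_ae (by fun_prop) ?_
            filter_upwards [hRbound] with y hy _ using hy s hs
      _ = c2 * L * π s * π t := setLIntegral_const _ _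
    rw [hrev s t hs ht, setLIntegral_const]
    exact h2.trans (le_of_eq (by ring))
  -- Key: lower semicontinuous + a.e. bound + full support ⇒ everywhere bound
  have key : ∀ (g : χ → ℝ) (c : ℝ≥0∞), c ≠ ∞ → LowerSemicontinuous g →
      (∀ᵐ x ∂π, ENNReal.ofReal (g x) ≤ c) → ∀ x, ENNReal.ofReal (g x) ≤ c := by
    intro g c hc hg hae x
    by_contra hx
    push_neg at hx
    have hx' : c.toReal < g x := by
      by_contra h
      push_neg at h
      exact absurd (ENNReal.ofReal_le_of_le_toReal h) (not_le.mpr hx)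
    set V : Set χ := {z | c.toReal < g z} with hV
    have hVopen : IsOpen V := hg.isOpen_preimage c.toReal
    have hVnull : π V = 0 := by
      rw [ae_iff] at hae
      refine measure_mono_null (fun z hz => ?_) hae
      simp only [Set.mem_setOf_eq, not_le]
      exact (ENNReal.lt_ofReal_iff_toReal_lt hc).mpr hz
    exact absurd hVnull (hsupp V hVopen ⟨x, hx'⟩).ne'
  -- Step 4: everywhere bound on open sets
  have hopen : ∀ U : Set χ, IsOpen U → ∀ x, P x U ≤ L * c2 * π U := by
    intro U hU x
    have hcne : L * c2 * π U ≠ ∞ :=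
      ENNReal.mul_ne_top (ENNReal.mul_ne_top hLlt.ne hc2lt.ne) (measure_ne_top π U)
    rcases Set.eq_empty_or_nonempty Uᶜ with hUc | hUc
    · -- U = univ : use the constant function 1
      have hUuniv : U = Set.univ := Set.compl_empty_iff.mp hUc
      subst hUuniv
      have hg : ∀ z, ∫ y, (1 : ℝ) ∂(P z) = (P z Set.univ).toReal := by
        intro z
        have := hFin z
        simp [integral_const]; rfl
      have hlsc1 := hlsc (fun _ => 1) continuous_const (fun _ => zero_le_one)
        ⟨1, fun _ => le_refl 1⟩
      have hae : ∀ᵐ z ∂π, ENNReal.ofReal (∫ y, (1 : ℝ) ∂(P z)) ≤ L * c2 * π Set.univ := by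
        filter_upwards [hPae Set.univ MeasurableSet.univ] with z hz
        rw [hg z, ENNReal.ofReal_toReal (measure_ne_top (P z) _)]
        exact hz
      have := key _ _ hcne hlsc1 hae x
      rwa [hg x, ENNReal.ofReal_toReal (measure_ne_top (P x) _)] at this
    · -- Uᶜ nonempty : approximate the indicator of U from below
      set f : ℕ → χ → ℝ := fun n z => min 1 (n * Metric.infDist z Uᶜ) with hf
      have hcont : ∀ n, Continuous (f n) := fun n =>
        continuous_const.min (continuous_const.mul (Metric.continuous_infDist_pt _))
      have hnn : ∀ n z, 0 ≤ f n z := fun n z =>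
        le_min zero_le_one (mul_nonneg (Nat.cast_nonneg n) Metric.infDist_nonneg)
      have hle1 : ∀ n z, f n z ≤ 1 := fun n z => min_le_left _ _
      have hmono : Monotone fun n => fun z => ENNReal.ofReal (f n z) := by
        intro m n hmn
        intro z
        refine ENNReal.ofReal_le_ofReal (min_le_min le_rfl ?_)
        exact mul_le_mul_of_nonneg_right (Nat.cast_le.2 hmn) Metric.infDist_nonneg
      have hsup : ∀ z, (⨆ n, ENNReal.ofReal (f n z))
          = U.indicator (fun _ => (1 : ℝ≥0∞)) z := by
        intro z
        by_cases hz : z ∈ U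
        · have hd : 0 < Metric.infDist z Uᶜ :=
            (hU.isClosed_compl.notMem_iff_infDist_pos hUc).1 (by simpa using hz)
          rw [Set.indicator_of_mem hz]
          apply le_antisymm
          · exact iSup_le fun n => by
              simpa using ENNReal.ofReal_le_ofReal (hle1 n z)
          · obtain ⟨n, hn⟩ := exists_nat_ge (1 / Metric.infDist z Uᶜ)
            have h1 : (1 : ℝ) ≤ n * Metric.infDist z Uᶜ := by
              rw [div_le_iff₀ hd] at hn
              linarith
            have hfn : f n z = 1 := min_eq_left h1
            calc (1 : ℝ≥0∞) = ENNReal.ofReal (f n z) := by simp [hfn]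
            _ ≤ ⨆ m, ENNReal.ofReal (f m z) :=
                le_iSup (fun m => ENNReal.ofReal (f m z)) n
        · have hd : Metric.infDist z Uᶜ = 0 := Metric.infDist_zero_of_mem hz
          simp [hf, hd, Set.indicator_of_notMem hz]
      have hint : ∀ n z, Integrable (f n) (P z) := by
        intro n z
        have := hFin z
        refine (integrable_const (1 : ℝ)).mono' ((hcont n).aestronglyMeasurable)
          (ae_of_all _ fun y => ?_)
        rw [Real.norm_eq_abs, abs_of_nonneg (hnn n y)]
        exact hle1 n y
      have heq : ∀ n z, ENNReal.ofReal (∫ y, f n y ∂(P z))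
          = ∫⁻ y, ENNReal.ofReal (f n y) ∂(P z) := fun n z =>
        ofReal_integral_eq_lintegral_ofReal (hint n z) (ae_of_all _ (hnn n))
      have hPU : ∀ z, P z U = ⨆ n, ∫⁻ y, ENNReal.ofReal (f n y) ∂(P z) := by
        intro z
        rw [← lintegral_iSup (fun n => ((hcont n).measurable).ennreal_ofReal)
          (fun m n hmn => hmono hmn)]
        have : (fun y => ⨆ n, ENNReal.ofReal (f n y))
            = U.indicator (fun _ => (1 : ℝ≥0∞)) := funext hsup
        rw [this, lintegral_indicator hU.measurableSet]
        simp
      have hae : ∀ n, ∀ᵐ z ∂π, ENNReal.ofReal (∫ y, f n y ∂(P z)) ≤ L * c2 * π U := by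
        intro n
        filter_upwards [hPae U hU.measurableSet] with z hz
        refine le_trans ?_ hz
        rw [heq n z, hPU z]
        exact le_iSup (fun m => ∫⁻ y, ENNReal.ofReal (f m y) ∂(P z)) n
      have hbd : ∀ n, ∀ z, ENNReal.ofReal (∫ y, f n y ∂(P z)) ≤ L * c2 * π U :=
        fun n => key _ _ hcne (hlsc (f n) (hcont n) (hnn n) ⟨1, hle1 n⟩) (hae n)
      rw [hPU x]
      exact iSup_le fun n => by rw [← heq n x]; exact hbd n x
  -- Step 5: extend to all measurable sets by outer regularity of π
  intro x s hs
  have hK0 : L * c2 ≠ 0 :=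
    mul_ne_zero (ENNReal.rpow_pos hl0 (hl1.trans_lt ENNReal.one_lt_top).ne).ne'
      (ENNReal.ofReal_pos.mpr hC2'pos).ne'
  have hKtop : L * c2 ≠ ∞ := ENNReal.mul_ne_top hLlt.ne hc2lt.ne
  refine ENNReal.le_of_forall_pos_le_add fun ε hε _ => ?_
  have hδ : (ε : ℝ≥0∞) / (L * c2) ≠ 0 := by
    simp [ENNReal.div_eq_zero_iff, hε.ne', hKtop]
  obtain ⟨U, hsU, hUopen, hUlt⟩ :=
    Set.exists_isOpen_lt_add s (measure_ne_top π s) hδ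
  calc P x s ≤ P x U := measure_mono hsU
  _ ≤ L * c2 * π U := hopen U hUopen x
  _ ≤ L * c2 * (π s + ε / (L * c2)) := mul_le_mul_right hUlt.le _
  _ = L * c2 * π s + ε := by
      rw [mul_add, ENNReal.mul_div_cancel hK0 hKtop]
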